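/- For an information frame 𝔸, every set of the form [X]_i = {a ∈ A : X ⊢_i a}, with i ∈ A and X ∈ Con_i, is a global state of 𝔸. -/
import Mathlib


/-- The data `(Con, Ent)` on token set `A` forms an information frame.
`Con i` is the set of finite sets of tokens consistent with `i`, and
`Ent i X a` means `X ⊢ᵢ a`.  The accessibility relation is `i R j ↔ {i} ∈ Con j`. -/
structure IsInfoFrame {A : Type*} [DecidableEq A]
    (Con : A → Set (Finset A)) (Ent : A → Finset A → A → Prop) : Prop where
  self_con : ∀ i : A, ({i} : Finset A) ∈ Con i
  con_down : ∀ (i : A) (X Y : Finset A), Y ⊆ X → X ∈ Con i → Y ∈ Con i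
  sound : ∀ (i : A) (X Y : Finset A), X ∈ Con i → (∀ b ∈ Y, Ent i X b) → Y ∈ Con i
  weaken : ∀ (i : A) (X Y : Finset A) (a : A),
    X ∈ Con i → Y ∈ Con i → X ⊆ Y → Ent i X a → Ent i Y a
  cut : ∀ (i : A) (X Y : Finset A) (a : A),
    X ∈ Con i → (∀ b ∈ Y, Ent i X b) → Ent i Y a → Ent i X a
  con_transfer : ∀ i j : A, ({i} : Finset A) ∈ Con j → Con i ⊆ Con j
  ent_transfer : ∀ (i j : A) (X : Finset A) (a : A),
    ({i} : Finset A) ∈ Con j → X ∈ Con i → Ent i X a → Ent j X a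
  interp : ∀ (i : A) (X Y : Finset A), X ∈ Con i → (∀ b ∈ Y, Ent i X b) →
    ∃ (e : A) (Z : Finset A), Z ∈ Con e ∧ (∀ b ∈ insert e Z, Ent i X b) ∧
      (∀ b ∈ Y, Ent e Z b)

/-- Finite consistency of a subset `x` of tokens. -/
def FinConsistent {A : Type*} (Con : A → Set (Finset A)) (x : Set A) : Prop :=
  ∀ F : Finset A, ↑F ⊆ x → ∃ i ∈ x, F ∈ Con i

/-- Closure of `x` under entailment. -/
def EntClosed {A : Type*} (Con : A → Set (Finset A))
    (Ent : A → Finset A → A → Prop) (x : Set A) : Prop :=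
  ∀ i ∈ x, ∀ X : Finset A, ↑X ⊆ x → X ∈ Con i → ∀ a : A, Ent i X a → a ∈ x

/-- Completeness of `x`. -/
def EntComplete {A : Type*} (Con : A → Set (Finset A))
    (Ent : A → Finset A → A → Prop) (x : Set A) : Prop :=
  ∀ a ∈ x, ∃ i ∈ x, ∃ X : Finset A, ↑X ⊆ x ∧ X ∈ Con i ∧ Ent i X a

/-- A (global) state of an information frame. -/
def IsState {A : Type*} (Con : A → Set (Finset A))
    (Ent : A → Finset A → A → Prop) (x : Set A) : Prop :=
  FinConsistent Con x ∧ EntClosed Con Ent x ∧ EntComplete Con Ent x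

theorem stmt11 {A : Type*} [DecidableEq A] (Con : A → Set (Finset A))
    (Ent : A → Finset A → A → Prop) (hF : IsInfoFrame Con Ent)
    (i : A) (X : Finset A) (hX : X ∈ Con i) :
    IsState Con Ent {a : A | Ent i X a} := by
  refine ⟨?_, ?_, ?_⟩
  · intro F hF'
    obtain ⟨e, Z, hZ, h1, h2⟩ := hF.interp i X F hX (fun b hb => hF' hb)
    exact ⟨e, h1 e (Finset.mem_insert_self e Z), hF.sound e Z F hZ h2⟩
  · intro j hj Y hY hYj a ha
    have hjX : Ent i X j := hj
    have hjs : ({j} : Finset A) ∈ Con i :=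
      hF.sound i X {j} hX (by simpa using hjX)
    have : Ent i Y a := hF.ent_transfer j i Y a hjs hYj ha
    exact hF.cut i X Y a hX (fun b hb => hY hb) this
  · intro a ha
    obtain ⟨e, Z, hZ, h1, h2⟩ := hF.interp i X {a} hX (by simpa using ha)
    exact ⟨e, h1 e (Finset.mem_insert_self e Z),
      Z, fun b hb => h1 b (Finset.mem_insert_of_mem hb), hZ, h2 a (by simp)⟩
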